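/- Let G be a GP5-graph constructed from a connected graph H with n vertices. If H has a semipaired dominating set of cardinality at most k (k ≤ n), then G has a semipaired dominating set of cardinality at most 2n + k. -/

import Mathlib

open SimpleGraph Finset

/-- `D` is a dominating set of `G`. -/
def Dominating {V : Type*} (G : SimpleGraph V) (D : Finset V) : Prop :=
  ∀ v : V, ∃ u ∈ D, u = v ∨ G.Adj u v

/-- `D` is a semipaired dominating set of `G`: a dominating set whose vertices can be
partitioned into pairs (via a fixed-point-free involution) at distance at most 2. -/
def SemiPairedDom {V : Type*} (G : SimpleGraph V) (D : Finset V) : Prop :=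
  Dominating G D ∧ ∃ f : V → V,
    (∀ u ∈ D, f u ∈ D) ∧ (∀ u ∈ D, f (f u) = u) ∧ (∀ u ∈ D, f u ≠ u) ∧
    (∀ u ∈ D, G.Adj u (f u) ∨ ∃ w, G.Adj u w ∧ G.Adj w (f u))

/-- `D` is a paired dominating set of `G`: a dominating set whose induced subgraph has a
perfect matching (encoded by a fixed-point-free involution pairing adjacent vertices). -/
def PairedDom {V : Type*} (G : SimpleGraph V) (D : Finset V) : Prop :=
  Dominating G D ∧ ∃ f : V → V,
    (∀ u ∈ D, f u ∈ D) ∧ (∀ u ∈ D, f (f u) = u) ∧ (∀ u ∈ D, f u ≠ u) ∧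
    (∀ u ∈ D, G.Adj u (f u))

/-- The domination number. -/
noncomputable def domNum (V : Type*) [Fintype V] (G : SimpleGraph V) : ℕ :=
  sInf {k : ℕ | ∃ D : Finset V, Dominating G D ∧ D.card = k}

/-- The semipaired domination number. -/
noncomputable def semiPairedDomNum (V : Type*) [Fintype V] (G : SimpleGraph V) : ℕ :=
  sInf {k : ℕ | ∃ D : Finset V, SemiPairedDom G D ∧ D.card = k}

/-- The paired domination number. -/
noncomputable def pairedDomNum (V : Type*) [Fintype V] (G : SimpleGraph V) : ℕ :=
  sInf {k : ℕ | ∃ D : Finset V, PairedDom G D ∧ D.card = k}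

/-- The GP5-graph obtained from `H` by attaching, for each vertex `a`, a disjoint path
`a_a – b_a – c_a – d_a – e_a` (the vertices `Sum.inr (a, 0), …, Sum.inr (a, 4)`) and
joining `a` to the central vertex `c_a = Sum.inr (a, 2)`. -/
def GP5 {α : Type*} (H : SimpleGraph α) : SimpleGraph (α ⊕ α × Fin 5) :=
  SimpleGraph.fromRel (fun u v =>
    (∃ a b, u = Sum.inl a ∧ v = Sum.inl b ∧ H.Adj a b) ∨
    (∃ a, u = Sum.inl a ∧ v = Sum.inr (a, 2)) ∨
    (∃ (a : α) (j k : Fin 5), u = Sum.inr (a, j) ∧ v = Sum.inr (a, k) ∧ (k : ℕ) = (j : ℕ) + 1))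

lemma gp5_adj_inl {α : Type*} {H : SimpleGraph α} {a b : α} (hab : H.Adj a b) :
    (GP5 H).Adj (Sum.inl a) (Sum.inl b) :=
  ⟨by simp [hab.ne], Or.inl (Or.inl ⟨a, b, rfl, rfl, hab⟩)⟩

lemma gp5_adj_path {α : Type*} (H : SimpleGraph α) (a : α) (j k : Fin 5)
    (h : (k : ℕ) = (j : ℕ) + 1) :
    (GP5 H).Adj (Sum.inr (a, j)) (Sum.inr (a, k)) := by
  refine ⟨?_, Or.inl (Or.inr (Or.inr ⟨a, j, k, rfl, rfl, h⟩))⟩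
  simp only [ne_eq, Sum.inr.injEq, Prod.mk.injEq]
  rintro ⟨-, rfl⟩; omega

/-- If `H` (connected, no isolated vertices, `n` vertices) has a semipaired
dominating set of size at most `k ≤ n`, then its GP5-graph has a semipaired dominating
set of size at most `2n + k`. -/
theorem gp5_semiPairedDom_of_semiPairedDom {α : Type*} [Fintype α] [DecidableEq α]
    (H : SimpleGraph α) (hH : H.Connected) (hiso : ∀ v : α, ∃ u : α, H.Adj u v)
    (k : ℕ) (hk : k ≤ Fintype.card α)
    (h : ∃ D : Finset α, SemiPairedDom H D ∧ D.card ≤ k) :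
    ∃ D' : Finset (α ⊕ α × Fin 5),
      SemiPairedDom (GP5 H) D' ∧ D'.card ≤ 2 * Fintype.card α + k := by
  obtain ⟨D, ⟨hdom, fH, hf1, hf2, hf3, hf4⟩, hcard⟩ := h
  classical
  set D' : Finset (α ⊕ α × Fin 5) :=
    (D.image Sum.inl ∪ Finset.univ.image (fun a => Sum.inr (a, (1 : Fin 5)))) ∪
      Finset.univ.image (fun a => Sum.inr (a, (3 : Fin 5))) with hD'
  have hmem_inl : ∀ v ∈ D, (Sum.inl v : α ⊕ α × Fin 5) ∈ D' := by
    intro v hv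
    simp only [hD', Finset.mem_union, Finset.mem_image]
    exact Or.inl (Or.inl ⟨v, hv, rfl⟩)
  have hmem1 : ∀ a : α, (Sum.inr (a, (1 : Fin 5)) : α ⊕ α × Fin 5) ∈ D' := by
    intro a; simp [hD']
  have hmem3 : ∀ a : α, (Sum.inr (a, (3 : Fin 5)) : α ⊕ α × Fin 5) ∈ D' := by
    intro a; simp [hD']
  refine ⟨D', ⟨?_, ?_⟩, ?_⟩
  · -- dominating
    rintro (a | ⟨a, j⟩)
    · obtain ⟨u, hu, huv⟩ := hdom a
      exact ⟨Sum.inl u, hmem_inl u hu,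
        huv.imp (fun h => by rw [h]) (fun h => gp5_adj_inl h)⟩
    · fin_cases j
      · exact ⟨Sum.inr (a, 1), hmem1 a, Or.inr (gp5_adj_path H a 0 1 rfl).symm⟩
      · exact ⟨Sum.inr (a, 1), hmem1 a, Or.inl rfl⟩
      · exact ⟨Sum.inr (a, 1), hmem1 a, Or.inr (gp5_adj_path H a 1 2 rfl)⟩
      · exact ⟨Sum.inr (a, 3), hmem3 a, Or.inl rfl⟩
      · exact ⟨Sum.inr (a, 3), hmem3 a, Or.inr (gp5_adj_path H a 3 4 rfl)⟩
  · -- pairing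
    refine ⟨fun u => match u with
      | Sum.inl v => Sum.inl (fH v)
      | Sum.inr (a, j) =>
          if j = 1 then Sum.inr (a, 3) else if j = 3 then Sum.inr (a, 1)
          else Sum.inr (a, j), ?_, ?_, ?_, ?_⟩ <;>
      (intro u hu;
       simp only [hD', Finset.mem_union, Finset.mem_image, Finset.mem_univ, true_and] at hu;
       rcases hu with (⟨v, hv, rfl⟩ | ⟨a, rfl⟩) | ⟨a, rfl⟩)
    · exact hmem_inl _ (hf1 v hv)
    · show (if (1 : Fin 5) = 1 then _ else _) ∈ D'
      rw [if_pos rfl]; exact hmem3 a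
    · show (if (3 : Fin 5) = 1 then _ else _) ∈ D'
      rw [if_neg (by decide), if_pos rfl]; exact hmem1 a
    · show Sum.inl (fH (fH v)) = Sum.inl v
      rw [hf2 v hv]
    · show (if (3 : Fin 5) = 1 then _ else _) = Sum.inr (a, (1 : Fin 5))
      rw [if_neg (by decide), if_pos rfl]
    · show (if (1 : Fin 5) = 1 then _ else _) = Sum.inr (a, (3 : Fin 5))
      rw [if_pos rfl]
    · simpa using fun h => hf3 v hv h
    · show (if (1 : Fin 5) = 1 then _ else _) ≠ Sum.inr (a, (1 : Fin 5))
      rw [if_pos rfl]; simp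
    · show (if (3 : Fin 5) = 1 then _ else _) ≠ Sum.inr (a, (3 : Fin 5))
      rw [if_neg (by decide), if_pos rfl]; simp
    · rcases hf4 v hv with h | ⟨w, h1, h2⟩
      · exact Or.inl (gp5_adj_inl h)
      · exact Or.inr ⟨Sum.inl w, gp5_adj_inl h1, gp5_adj_inl h2⟩
    · refine Or.inr ⟨Sum.inr (a, 2), gp5_adj_path H a 1 2 rfl, ?_⟩
      show (GP5 H).Adj _ (if (1 : Fin 5) = 1 then _ else _)
      rw [if_pos rfl]; exact gp5_adj_path H a 2 3 rfl
    · refine Or.inr ⟨Sum.inr (a, 2), (gp5_adj_path H a 2 3 rfl).symm, ?_⟩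
      show (GP5 H).Adj _ (if (3 : Fin 5) = 1 then _ else _)
      rw [if_neg (by decide), if_pos rfl]
      exact (gp5_adj_path H a 1 2 rfl).symm
  · -- cardinality
    calc D'.card ≤ (D.image Sum.inl ∪
          Finset.univ.image (fun a => Sum.inr (a, (1 : Fin 5)))).card +
          (Finset.univ.image (fun a : α => Sum.inr (a, (3 : Fin 5)))).card :=
            Finset.card_union_le _ _
      _ ≤ (D.image Sum.inl).card +
          (Finset.univ.image (fun a : α => Sum.inr (a, (1 : Fin 5)))).card +
          (Finset.univ.image (fun a : α => Sum.inr (a, (3 : Fin 5)))).card := by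
            exact Nat.add_le_add_right (Finset.card_union_le _ _) _
      _ ≤ D.card + Fintype.card α + Fintype.card α := by
            gcongr <;>
              exact (Finset.card_image_le).trans (by simp [Finset.card_le_univ])
      _ ≤ 2 * Fintype.card α + k := by omega
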